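/- Let X, Y, Z be finite random variables with |Y| = |Z| = 2 and |X| = n ≥ 2. Every joint distribution P(X,Y,Z) with P(Z=z) > 0 for all z that satisfies the IV inequalities max_x sum_y max_z P(X=x,Y=y|Z=z) ≤ 1 arises as the observational distribution of some SCM in the IV model class (i.e., some structural model X = f_X(Z,U), Y = f_Y(X,U) with U independent of Z). That is, the IV inequalities are sharp (necessary and sufficient) for binary instrument, binary outcome, and finite-valued treatment. -/

import Mathlib

open MeasureTheory ProbabilityTheory
open scoped ENNReal

lemma couplingA {S : Type*} [Fintype S] [DecidableEq S] (a b : S → ℝ)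
    (ha : ∀ l, 0 ≤ a l) (hb : ∀ l, 0 ≤ b l) (hab : ∑ l, a l = ∑ l, b l)
    (l0 : S) (heq : a l0 + b l0 = ∑ l, a l) :
    ∃ q : S → S → ℝ, (∀ l r, 0 ≤ q l r) ∧ (∀ l, q l l = 0) ∧
      (∀ l, ∑ r, q l r = a l) ∧ (∀ r, ∑ l, q l r = b r) := by
  refine ⟨fun l r => if l = l0 then (if r = l0 then 0 else b r) else (if r = l0 then a l else 0),
    ?_, ?_, ?_, ?_⟩
  · intro l r
    by_cases h1 : l = l0 <;> by_cases h2 : r = l0 <;> simp [h1, h2, ha, hb]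
  · intro l
    by_cases h1 : l = l0 <;> simp [h1]
  · intro l
    by_cases h1 : l = l0
    · subst h1
      simp only [if_pos rfl, eq_self_iff_true, if_true]
      have : ∀ r : S, (if r = l then 0 else b r) = b r - (if r = l then b r else 0) := by
        intro r; by_cases h : r = l <;> simp [h]
      rw [Finset.sum_congr rfl (fun r _ => this r), Finset.sum_sub_distrib,
        Finset.sum_ite_eq' Finset.univ l b]
      simp only [Finset.mem_univ, if_pos]
      rw [← hab]; linarith
    · simp only [if_neg h1]
      rw [Finset.sum_ite_eq' Finset.univ l0 (fun _ => a l)]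
      simp
  · intro r
    by_cases h2 : r = l0
    · subst h2
      simp only [if_pos rfl, eq_self_iff_true, if_true]
      have : ∀ l : S, (if l = r then (0:ℝ) else a l) = a l - (if l = r then a l else 0) := by
        intro l; by_cases h : l = r <;> simp [h]
      rw [Finset.sum_congr rfl (fun l _ => this l), Finset.sum_sub_distrib,
        Finset.sum_ite_eq' Finset.univ r a]
      simp only [Finset.mem_univ, if_pos]
      linarith
    · simp only [if_neg h2]
      rw [Finset.sum_ite_eq' Finset.univ l0 (fun _ => b r)]
      simp

lemma couplingStep {S : Type*} [Fintype S] [DecidableEq S] (a b : S → ℝ)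
    (l1 l2 : S) (h12 : l1 ≠ l2) (ε : ℝ) (hε : 0 ≤ ε)
    (q' : S → S → ℝ)
    (hnn : ∀ l r, 0 ≤ q' l r) (hd : ∀ l, q' l l = 0)
    (hrow : ∀ l, ∑ r, q' l r = Function.update a l1 (a l1 - ε) l)
    (hcol : ∀ r, ∑ l, q' l r = Function.update b l2 (b l2 - ε) r) :
    ∃ q : S → S → ℝ, (∀ l r, 0 ≤ q l r) ∧ (∀ l, q l l = 0) ∧
      (∀ l, ∑ r, q l r = a l) ∧ (∀ r, ∑ l, q l r = b r) := by
  refine ⟨fun l r => q' l r + if l = l1 ∧ r = l2 then ε else 0, ?_, ?_, ?_, ?_⟩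
  · intro l r
    have : (0:ℝ) ≤ if l = l1 ∧ r = l2 then ε else 0 := by split <;> simp [hε]
    exact add_nonneg (hnn l r) this
  · intro l
    have hne : ¬(l = l1 ∧ l = l2) := fun ⟨u, v⟩ => h12 (u.symm.trans v)
    simp [hd l, hne]
  · intro l
    have : ∑ r, (q' l r + if l = l1 ∧ r = l2 then ε else 0)
        = (∑ r, q' l r) + ∑ r, (if l = l1 ∧ r = l2 then ε else 0) := by
      rw [Finset.sum_add_distrib]
    rw [this, hrow l]
    by_cases h : l = l1
    · subst h
      simp only [true_and, Function.update_self]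
      rw [Finset.sum_ite_eq' Finset.univ l2 (fun _ => ε)]
      simp
    · simp only [h, false_and, if_false, Finset.sum_const_zero, add_zero]
      rw [Function.update_of_ne h]
  · intro r
    have : ∑ l, (q' l r + if l = l1 ∧ r = l2 then ε else 0)
        = (∑ l, q' l r) + ∑ l, (if l = l1 ∧ r = l2 then ε else 0) := by
      rw [Finset.sum_add_distrib]
    rw [this, hcol r]
    by_cases h : r = l2
    · subst h
      simp only [and_true, Function.update_self]
      rw [Finset.sum_ite_eq' Finset.univ l1 (fun _ => ε)]
      simp
    · simp only [h, and_false, if_false, Finset.sum_const_zero, add_zero]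
      rw [Function.update_of_ne h]

lemma couplingB {S : Type*} [Fintype S] [DecidableEq S] (k : ℕ) :
    ∀ (a b : S → ℝ), (∀ l, 0 ≤ a l) → (∀ l, 0 ≤ b l) → (∑ l, a l = ∑ l, b l) →
    (∀ l, a l + b l ≤ ∑ l, a l) →
    (Finset.univ.filter (fun l => a l ≠ 0)).card
      + (Finset.univ.filter (fun l => b l ≠ 0)).card ≤ k →
    ∃ q : S → S → ℝ, (∀ l r, 0 ≤ q l r) ∧ (∀ l, q l l = 0) ∧
      (∀ l, ∑ r, q l r = a l) ∧ (∀ r, ∑ l, q l r = b r) := by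
  induction k with
  | zero =>
    intro a b ha hb hab hle hcard
    have h1 : (Finset.univ.filter (fun l => a l ≠ 0)) = ∅ := by
      rw [← Finset.card_eq_zero]; omega
    have h2 : (Finset.univ.filter (fun l => b l ≠ 0)) = ∅ := by
      rw [← Finset.card_eq_zero]; omega
    have ha0 : ∀ l, a l = 0 := by
      intro l; by_contra h
      exact Finset.notMem_empty l (h1 ▸ Finset.mem_filter.2 ⟨Finset.mem_univ l, h⟩)
    have hb0 : ∀ l, b l = 0 := by
      intro l; by_contra h
      exact Finset.notMem_empty l (h2 ▸ Finset.mem_filter.2 ⟨Finset.mem_univ l, h⟩)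
    exact ⟨fun _ _ => 0, fun _ _ => le_refl 0, fun _ => rfl,
      fun l => by simp [ha0 l], fun r => by simp [hb0 r]⟩
  | succ k ih =>
    intro a b ha hb hab hle hcard
    by_cases hex : ∃ l0, a l0 + b l0 = ∑ l, a l
    · obtain ⟨l0, hl0⟩ := hex
      exact couplingA a b ha hb hab l0 hl0
    push_neg at hex
    have hstrict : ∀ l, a l + b l < ∑ l, a l := fun l => lt_of_le_of_ne (hle l) (hex l)
    by_cases hpa : ∃ l1, a l1 ≠ 0
    swap
    · push_neg at hpa
      have hT : ∑ l, a l = 0 := by simp [hpa]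
      have hb0 : ∀ l, b l = 0 := by
        intro l
        have := hle l
        rw [hpa l, hT, zero_add] at this
        exact le_antisymm this (hb l)
      exact ⟨fun _ _ => 0, fun _ _ => le_refl 0, fun _ => rfl,
        fun l => by simp [hpa l], fun r => by simp [hb0 r]⟩
    obtain ⟨l1, hl1ne⟩ := hpa
    have hl1 : 0 < a l1 := lt_of_le_of_ne (ha l1) (Ne.symm hl1ne)
    set T := ∑ l, a l with hT
    -- find l2 ≠ l1 with b l2 > 0
    have hl2ex : ∃ l2, l2 ≠ l1 ∧ 0 < b l2 := by
      by_contra hno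
      push_neg at hno
      have hbz : ∀ l, l ≠ l1 → b l = 0 := fun l hl => le_antisymm (hno l hl) (hb l)
      have hsb : ∑ l, b l = b l1 :=
        Finset.sum_eq_single l1 (fun l _ hl => hbz l hl)
          (fun h => absurd (Finset.mem_univ l1) h)
      linarith [hle l1, hab, hsb, hl1]
    obtain ⟨l2, hl21, hl2⟩ := hl2ex
    have h12 : l1 ≠ l2 := fun h => hl21 h.symm
    set F := (Finset.univ.erase l1).erase l2 with hF
    have hFmem : ∀ l, l ≠ l1 → l ≠ l2 → l ∈ F := by
      intro l h1 h2
      exact Finset.mem_erase.2 ⟨h2, Finset.mem_erase.2 ⟨h1, Finset.mem_univ l⟩⟩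
    set m := min (a l1) (b l2) with hmdef
    have hm : 0 < m := lt_min hl1 hl2
    by_cases hc : ∀ l ∈ F, m ≤ T - a l - b l
    · -- ε = m, support shrinks, recurse
      set ε := m with hεdef
      have hεa : ε ≤ a l1 := min_le_left _ _
      have hεb : ε ≤ b l2 := min_le_right _ _
      set a' := Function.update a l1 (a l1 - ε) with ha'
      set b' := Function.update b l2 (b l2 - ε) with hb'
      have hsa' : ∑ l, a' l = T - ε := by
        rw [ha', Finset.sum_update_of_mem (Finset.mem_univ l1)]
        have := Finset.sum_eq_sum_sdiff_singleton_add (Finset.mem_univ l1) a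
        linarith [this, hT]
      have hsb' : ∑ l, b' l = T - ε := by
        rw [hb', Finset.sum_update_of_mem (Finset.mem_univ l2)]
        have := Finset.sum_eq_sum_sdiff_singleton_add (Finset.mem_univ l2) b
        linarith [this, hT, hab]
      have ha'nn : ∀ l, 0 ≤ a' l := by
        intro l; rw [ha']
        by_cases h : l = l1
        · subst h; rw [Function.update_self]; linarith
        · rw [Function.update_of_ne h]; exact ha l
      have hb'nn : ∀ l, 0 ≤ b' l := by
        intro l; rw [hb']
        by_cases h : l = l2
        · subst h; rw [Function.update_self]; linarith
        · rw [Function.update_of_ne h]; exact hb l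
      have hle' : ∀ l, a' l + b' l ≤ ∑ l, a' l := by
        intro l
        rw [hsa', ha', hb']
        by_cases h1 : l = l1
        · subst h1
          rw [Function.update_self, Function.update_of_ne h12.symm.symm]
          · have := hle l; linarith
        · rw [Function.update_of_ne h1]
          by_cases h2 : l = l2
          · subst h2
            rw [Function.update_self]
            have := hle l; linarith
          · rw [Function.update_of_ne h2]
            have := hc l (hFmem l h1 h2)
            linarith
      -- cardinality decreases
      have hsub_a : Finset.univ.filter (fun l => a' l ≠ 0) ⊆ Finset.univ.filter (fun l => a l ≠ 0) := by
        intro l hl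
        rw [Finset.mem_filter] at hl ⊢
        refine ⟨Finset.mem_univ l, ?_⟩
        by_cases h : l = l1
        · subst h; exact hl1ne
        · rw [ha', Function.update_of_ne h] at hl; exact hl.2
      have hsub_b : Finset.univ.filter (fun l => b' l ≠ 0) ⊆ Finset.univ.filter (fun l => b l ≠ 0) := by
        intro l hl
        rw [Finset.mem_filter] at hl ⊢
        refine ⟨Finset.mem_univ l, ?_⟩
        by_cases h : l = l2
        · subst h; exact ne_of_gt hl2
        · rw [hb', Function.update_of_ne h] at hl; exact hl.2
      have hcard' : (Finset.univ.filter (fun l => a' l ≠ 0)).card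
          + (Finset.univ.filter (fun l => b' l ≠ 0)).card ≤ k := by
        rcases le_total (a l1) (b l2) with h | h
        · have hε1 : ε = a l1 := min_eq_left h
          have : l1 ∉ Finset.univ.filter (fun l => a' l ≠ 0) := by
            simp [ha', hε1]
          have hss : Finset.univ.filter (fun l => a' l ≠ 0) ⊂ Finset.univ.filter (fun l => a l ≠ 0) :=
            (Finset.ssubset_iff_of_subset hsub_a).2
              ⟨l1, Finset.mem_filter.2 ⟨Finset.mem_univ l1, hl1ne⟩, this⟩
          have h1 := Finset.card_lt_card hss
          have h2 := Finset.card_le_card hsub_b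
          omega
        · have hε1 : ε = b l2 := min_eq_right h
          have : l2 ∉ Finset.univ.filter (fun l => b' l ≠ 0) := by
            simp [hb', hε1]
          have hss : Finset.univ.filter (fun l => b' l ≠ 0) ⊂ Finset.univ.filter (fun l => b l ≠ 0) :=
            (Finset.ssubset_iff_of_subset hsub_b).2
              ⟨l2, Finset.mem_filter.2 ⟨Finset.mem_univ l2, ne_of_gt hl2⟩, this⟩
          have h1 := Finset.card_lt_card hss
          have h2 := Finset.card_le_card hsub_a
          omega
      obtain ⟨q', hq1, hq2, hq3, hq4⟩ := ih a' b' ha'nn hb'nn (hsa'.trans hsb'.symm) hle' hcard'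
      exact couplingStep a b l1 l2 h12 ε (le_of_lt hm) q' hq1 hq2 hq3 hq4
    · -- bystander slack binds: one step then equality case
      push_neg at hc
      obtain ⟨l3, hl3F, hl3⟩ := hc
      obtain ⟨l4, hl4F, hl4min⟩ := Finset.exists_min_image F (fun l => T - a l - b l) ⟨l3, hl3F⟩
      set ε := T - a l4 - b l4 with hεdef
      have hεm : ε < m := lt_of_le_of_lt (hl4min l3 hl3F) hl3
      have hεpos : 0 < ε := by
        have := hstrict l4; linarith [hεdef]
      have hεa : ε ≤ a l1 := le_of_lt (lt_of_lt_of_le hεm (min_le_left _ _))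
      have hεb : ε ≤ b l2 := le_of_lt (lt_of_lt_of_le hεm (min_le_right _ _))
      have hl41 : l4 ≠ l1 := (Finset.mem_erase.1 (Finset.mem_erase.1 hl4F).2).1
      have hl42 : l4 ≠ l2 := (Finset.mem_erase.1 hl4F).1
      set a' := Function.update a l1 (a l1 - ε) with ha'
      set b' := Function.update b l2 (b l2 - ε) with hb'
      have hsa' : ∑ l, a' l = T - ε := by
        rw [ha', Finset.sum_update_of_mem (Finset.mem_univ l1)]
        have := Finset.sum_eq_sum_sdiff_singleton_add (Finset.mem_univ l1) a
        linarith [this, hT]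
      have hsb' : ∑ l, b' l = T - ε := by
        rw [hb', Finset.sum_update_of_mem (Finset.mem_univ l2)]
        have := Finset.sum_eq_sum_sdiff_singleton_add (Finset.mem_univ l2) b
        linarith [this, hT, hab]
      have ha'nn : ∀ l, 0 ≤ a' l := by
        intro l; rw [ha']
        by_cases h : l = l1
        · subst h; rw [Function.update_self]; linarith
        · rw [Function.update_of_ne h]; exact ha l
      have hb'nn : ∀ l, 0 ≤ b' l := by
        intro l; rw [hb']
        by_cases h : l = l2
        · subst h; rw [Function.update_self]; linarith
        · rw [Function.update_of_ne h]; exact hb l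
      have heq4 : a' l4 + b' l4 = ∑ l, a' l := by
        rw [hsa', ha', hb', Function.update_of_ne hl41, Function.update_of_ne hl42]
        simp only [hεdef]; ring
      obtain ⟨q', hq1, hq2, hq3, hq4⟩ :=
        couplingA a' b' ha'nn hb'nn (hsa'.trans hsb'.symm) l4 heq4
      exact couplingStep a b l1 l2 h12 ε (le_of_lt hεpos) q' hq1 hq2 hq3 hq4



lemma measure_fin_sum {α : Type*} [Fintype α] [MeasurableSpace α] [MeasurableSingletonClass α]
    (μ : Measure α) (s : Set α) [DecidablePred (· ∈ s)] :
    μ s = ∑ a ∈ Finset.univ.filter (· ∈ s), μ {a} := by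
  have hs : s = ⋃ a ∈ Finset.univ.filter (· ∈ s), ({a} : Set α) := by
    ext x; simp
  conv_lhs => rw [hs]
  rw [measure_biUnion_finset]
  · intro i _ j _ hij
    simp [Function.onFun, Set.disjoint_singleton, hij]
  · intro b _; exact measurableSet_singleton b

def notEquiv : Bool ≃ Bool := ⟨Bool.not, Bool.not, Bool.not_not, Bool.not_not⟩

lemma bool_sum_enn (f : Bool → ℝ≥0∞) (y : Bool) : ∑ b, f b = f y + f (!y) := by
  cases y <;> simp [Fintype.sum_bool] <;> ring

lemma bool_ne_eq_not {b c : Bool} (h : b ≠ c) : b = !c := by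
  cases b <;> cases c <;> simp_all

theorem stmt3 (n : ℕ) (hn : 2 ≤ n)
    (P : Measure (Fin n × Bool × Bool)) [IsProbabilityMeasure P]
    (hpos : ∀ z : Bool, 0 < P {v | v.2.2 = z})
    (hIV : ∀ x : Fin n, ∑ y : Bool, ⨆ z : Bool,
        P {v | v.1 = x ∧ v.2.1 = y ∧ v.2.2 = z} / P {v | v.2.2 = z} ≤ 1) :
    ∃ (Ω 𝓤 : Type) (_ : MeasurableSpace Ω) (_ : MeasurableSpace 𝓤)
      (μ : Measure Ω) (_ : IsProbabilityMeasure μ)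
      (Z : Ω → Bool) (U : Ω → 𝓤)
      (fX : Bool → 𝓤 → Fin n) (fY : Fin n → 𝓤 → Bool),
      Measurable Z ∧ Measurable U ∧
      (∀ z, Measurable (fun ω => fX z (U ω))) ∧
      (∀ x, Measurable (fun ω => fY x (U ω))) ∧
      IndepFun Z U μ ∧
      Measure.map
        (fun ω => (fX (Z ω) (U ω), fY (fX (Z ω) (U ω)) (U ω), Z ω)) μ = P := by
  classical
  set Pz : Bool → ℝ≥0∞ := fun z => P {v | v.2.2 = z} with hPzdef
  have hPzne : ∀ z, Pz z ≠ 0 := fun z => (hpos z).ne'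
  have hPztop : ∀ z, Pz z ≠ ∞ := fun z => measure_ne_top P _
  have hsingle : ∀ (x : Fin n) (y z : Bool),
      {v : Fin n × Bool × Bool | v.1 = x ∧ v.2.1 = y ∧ v.2.2 = z} = {(x, y, z)} := by
    intro x y z; ext ⟨a, b, c⟩; simp [Prod.ext_iff]
  simp only [hsingle] at hIV
  -- real conditional probabilities
  set p : Bool → (Fin n × Bool) → ℝ :=
    fun z l => (P {(l.1, l.2, z)} / Pz z).toReal with hpdef
  have hdivtop : ∀ (z : Bool) (l : Fin n × Bool), P {(l.1, l.2, z)} / Pz z ≠ ∞ :=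
    fun z l => (ENNReal.div_lt_top (measure_ne_top P _) (hPzne z)).ne
  have hp_nonneg : ∀ z l, 0 ≤ p z l := fun z l => ENNReal.toReal_nonneg
  -- the IV inequality in real form
  have hp_le : ∀ (x : Fin n) (y z z' : Bool), p z (x, y) + p z' (x, !y) ≤ 1 := by
    intro x y z z'
    have h1 : P {(x, y, z)} / Pz z ≤ ⨆ w : Bool, P {(x, y, w)} / Pz w :=
      le_iSup (fun w : Bool => P {(x, y, w)} / Pz w) z
    have h2 : P {(x, !y, z')} / Pz z' ≤ ⨆ w : Bool, P {(x, !y, w)} / Pz w :=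
      le_iSup (fun w : Bool => P {(x, !y, w)} / Pz w) z'
    have h3 : (⨆ w : Bool, P {(x, y, w)} / Pz w) + (⨆ w : Bool, P {(x, !y, w)} / Pz w) ≤ 1 := by
      have := hIV x
      rw [bool_sum_enn (fun b => ⨆ w : Bool, P {(x, b, w)} / Pz w) y] at this
      exact this
    have h4 : P {(x, y, z)} / Pz z + P {(x, !y, z')} / Pz z' ≤ 1 :=
      le_trans (add_le_add h1 h2) h3
    have h5 := ENNReal.toReal_mono ENNReal.one_ne_top h4
    rw [ENNReal.toReal_add (hdivtop z (x, y)) (hdivtop z' (x, !y))] at h5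
    simp only [hpdef]
    simpa using h5
  -- conditional probabilities sum to one
  have hPzsum : ∀ z, Pz z = ∑ l : Fin n × Bool, P {(l.1, l.2, z)} := by
    intro z
    have hset : {v : Fin n × Bool × Bool | v.2.2 = z}
        = ⋃ l ∈ (Finset.univ : Finset (Fin n × Bool)), ({(l.1, l.2, z)} : Set _) := by
      ext ⟨av, bv, cv⟩
      simp only [Set.mem_setOf_eq, Set.mem_iUnion, Set.mem_singleton_iff, Finset.mem_univ,
        exists_true_left, exists_prop, true_and, Prod.ext_iff]
      constructor
      · rintro rfl; exact ⟨(av, bv), rfl, rfl, rfl⟩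
      · rintro ⟨l, -, -, h⟩; exact h
    rw [hPzdef]
    simp only
    rw [hset, measure_biUnion_finset]
    · intro i _ j _ hij
      simp only [Function.onFun, Set.disjoint_singleton]
      intro h; rw [Prod.ext_iff, Prod.ext_iff] at h
      exact hij (Prod.ext h.1 h.2.1)
    · intro b _; exact measurableSet_singleton _
  have hp_sum : ∀ z, ∑ l : Fin n × Bool, p z l = 1 := by
    intro z
    rw [hpdef]
    simp only
    rw [← ENNReal.toReal_sum (fun l _ => hdivtop z l)]
    have : ∑ l : Fin n × Bool, P {(l.1, l.2, z)} / Pz z = 1 := by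
      simp only [div_eq_mul_inv, ← Finset.sum_mul]
      rw [← hPzsum z, ENNReal.mul_inv_cancel (hPzne z) (hPztop z)]
    rw [this, ENNReal.toReal_one]
  -- the coupling
  set a : (Fin n × Bool) → ℝ := fun l => p false l with hadef
  set b : (Fin n × Bool) → ℝ := fun l => p true (l.1, !l.2) with hbdef
  have hsa : ∑ l, a l = 1 := hp_sum false
  have hsb : ∑ l, b l = 1 := by
    rw [hbdef]
    simp only
    rw [← hp_sum true]
    exact Fintype.sum_equiv (Equiv.prodCongr (Equiv.refl (Fin n)) notEquiv)
      _ _ (fun l => rfl)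
  obtain ⟨q, hqnn, hqdiag, hqrow, hqcol⟩ := couplingB
    ((Finset.univ.filter (fun l => a l ≠ 0)).card
      + (Finset.univ.filter (fun l => b l ≠ 0)).card) a b
    (fun l => hp_nonneg _ _) (fun l => hp_nonneg _ _) (hsa.trans hsb.symm)
    (fun l => by rw [hsa]; exact hp_le l.1 l.2 false true) le_rfl
  -- the response-type weights
  set Qc : (Fin n × Bool) → (Fin n × Bool) → ℝ := fun l r => q l (r.1, !r.2) with hQcdef
  have hQcnn : ∀ l r, 0 ≤ Qc l r := fun l r => hqnn _ _
  have hQcrow : ∀ l, ∑ r, Qc l r = a l := by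
    intro l
    rw [← hqrow l]
    exact Fintype.sum_equiv (Equiv.prodCongr (Equiv.refl (Fin n)) notEquiv)
      (fun r => Qc l r) (fun r => q l r) (fun r => rfl)
  have hQccol : ∀ r, ∑ l, Qc l r = p true r := by
    intro r
    have h := hqcol (r.1, !r.2)
    have hb2 : b (r.1, !r.2) = p true r := by
      rw [hbdef]; simp [Bool.not_not]
    rw [hb2] at h
    exact h
  have hQcdiag : ∀ (x : Fin n) (y : Bool), Qc (x, y) (x, !y) = 0 := by
    intro x y
    rw [hQcdef]
    simp only [Bool.not_not]
    exact hqdiag (x, y)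
  -- measures
  set μU : Measure ((Fin n × Bool) × (Fin n × Bool)) :=
    ∑ u : (Fin n × Bool) × (Fin n × Bool), (ENNReal.ofReal (Qc u.1 u.2)) • Measure.dirac u
    with hmuUdef
  have hμU_apply : ∀ s : Set ((Fin n × Bool) × (Fin n × Bool)),
      μU s = ∑ u : (Fin n × Bool) × (Fin n × Bool),
        s.indicator (fun u => ENNReal.ofReal (Qc u.1 u.2)) u := by
    intro s
    have hms : MeasurableSet s := (Set.to_countable s).measurableSet
    rw [hmuUdef, Measure.finset_sum_apply]
    refine Finset.sum_congr rfl (fun u _ => ?_)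
    rw [Measure.smul_apply, Measure.dirac_apply' _ hms]
    by_cases h : u ∈ s
    · simp [Set.indicator_of_mem h, h]
    · simp [Set.indicator_of_notMem h, h]
  have hμU_univ : μU Set.univ = 1 := by
    rw [hμU_apply, Set.indicator_univ,
      ← ENNReal.ofReal_sum_of_nonneg (fun u _ => hQcnn u.1 u.2)]
    have h1 : ∑ u : (Fin n × Bool) × (Fin n × Bool), Qc u.1 u.2 = 1 := by
      rw [Fintype.sum_prod_type]
      rw [Finset.sum_congr rfl (fun l _ => hQcrow l)]
      exact hsa
    rw [h1, ENNReal.ofReal_one]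
  haveI : IsProbabilityMeasure μU := ⟨hμU_univ⟩
  have hZmeas : Measurable (fun v : Fin n × Bool × Bool => v.2.2) := measurable_of_countable _
  set μZ : Measure Bool := P.map (fun v => v.2.2) with hmuZdef
  haveI : IsProbabilityMeasure μZ := Measure.isProbabilityMeasure_map hZmeas.aemeasurable
  have hμZ : ∀ z, μZ {z} = Pz z := by
    intro z
    rw [hmuZdef, Measure.map_apply hZmeas (measurableSet_singleton z)]
    rfl
  refine ⟨Bool × ((Fin n × Bool) × (Fin n × Bool)), (Fin n × Bool) × (Fin n × Bool),
    inferInstance, inferInstance, μZ.prod μU, inferInstance,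
    Prod.fst, Prod.snd,
    (fun z u => if z then u.2.1 else u.1.1),
    (fun x u => if x = u.1.1 then u.1.2 else u.2.2),
    measurable_fst, measurable_snd,
    fun z => measurable_of_countable _, fun x => measurable_of_countable _, ?_, ?_⟩
  · -- independence
    rw [indepFun_iff_map_prod_eq_prod_map_map measurable_fst.aemeasurable
      measurable_snd.aemeasurable]
    have h1 : (fun ω : Bool × ((Fin n × Bool) × (Fin n × Bool)) => (ω.1, ω.2)) = id := rfl
    rw [h1, Measure.map_id, Measure.map_fst_prod, Measure.map_snd_prod]
    simp only [measure_univ, one_smul]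
  · -- pushforward equals P
    apply Measure.ext
    intro s hs
    rw [measure_fin_sum _ s, measure_fin_sum P s]
    refine Finset.sum_congr rfl (fun v _ => ?_)
    obtain ⟨x, y, z⟩ := v
    rw [Measure.map_apply (measurable_of_countable _) (measurableSet_singleton _)]
    have hpre : ((fun ω : Bool × ((Fin n × Bool) × (Fin n × Bool)) =>
          ((if ω.1 then ω.2.2.1 else ω.2.1.1 : Fin n),
            (if (if ω.1 then ω.2.2.1 else ω.2.1.1) = ω.2.1.1 then ω.2.1.2 else ω.2.2.2 : Bool),
            ω.1)) ⁻¹' {(x, y, z)})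
        = {z} ×ˢ {u : (Fin n × Bool) × (Fin n × Bool) |
            (if z then u.2.1 else u.1.1) = x ∧ (if x = u.1.1 then u.1.2 else u.2.2) = y} := by
      ext ⟨z', u⟩
      simp only [Set.mem_preimage, Set.mem_singleton_iff, Set.mem_prod, Set.mem_setOf_eq,
        Prod.ext_iff]
      constructor
      · rintro ⟨h1, h2, rfl⟩
        refine ⟨rfl, h1, ?_⟩
        rw [← h1]; exact h2
      · rintro ⟨rfl, h1, h2⟩
        refine ⟨h1, ?_, rfl⟩
        rw [h1]; exact h2
    rw [hpre, Measure.prod_prod, hμZ z]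
    have hset2 : μU {u : (Fin n × Bool) × (Fin n × Bool) |
        (if z then u.2.1 else u.1.1) = x ∧ (if x = u.1.1 then u.1.2 else u.2.2) = y}
        = ENNReal.ofReal (p z (x, y)) := by
      cases z
      · -- z = false : the set is {u | u.1 = (x, y)}
        have hsimp : {u : (Fin n × Bool) × (Fin n × Bool) |
            (if (false : Bool) then u.2.1 else u.1.1) = x
              ∧ (if x = u.1.1 then u.1.2 else u.2.2) = y}
            = {u | u.1 = (x, y)} := by
          ext u
          simp only [Set.mem_setOf_eq, Bool.false_eq_true, if_false, Prod.ext_iff]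
          constructor
          · rintro ⟨h1, h2⟩
            rw [if_pos h1.symm] at h2
            exact ⟨h1, h2⟩
          · rintro ⟨h1, h2⟩
            exact ⟨h1, by rw [if_pos h1.symm]; exact h2⟩
        rw [hsimp, hμU_apply]
        have hpoint : ∀ u : (Fin n × Bool) × (Fin n × Bool),
            ({u : (Fin n × Bool) × (Fin n × Bool) | u.1 = (x, y)}).indicator
              (fun u => ENNReal.ofReal (Qc u.1 u.2)) u
            = if u.1 = (x, y) then ENNReal.ofReal (Qc u.1 u.2) else 0 := by
          intro u
          by_cases h : u ∈ {u : (Fin n × Bool) × (Fin n × Bool) | u.1 = (x, y)}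
          · rw [Set.indicator_of_mem h, if_pos (show u.1 = (x, y) from h)]
          · rw [Set.indicator_of_notMem h, if_neg (show ¬u.1 = (x, y) from h)]
        rw [Finset.sum_congr rfl (fun u _ => hpoint u), Fintype.sum_prod_type]
        have hinner : ∀ l : Fin n × Bool,
            (∑ r : Fin n × Bool, if (l, r).1 = (x, y)
              then ENNReal.ofReal (Qc (l, r).1 (l, r).2) else 0)
            = if l = (x, y) then ∑ r, ENNReal.ofReal (Qc l r) else 0 := by
          intro l
          by_cases h : l = (x, y) <;> simp [h]
        rw [Finset.sum_congr rfl (fun l _ => hinner l),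
          Finset.sum_ite_eq' Finset.univ (x, y) (fun l => ∑ r, ENNReal.ofReal (Qc l r))]
        simp only [Finset.mem_univ, if_pos]
        rw [← ENNReal.ofReal_sum_of_nonneg (fun r _ => hQcnn (x, y) r), hQcrow (x, y)]
      · -- z = true
        rw [hμU_apply]
        have hpoint : ∀ u : (Fin n × Bool) × (Fin n × Bool),
            ({u : (Fin n × Bool) × (Fin n × Bool) |
              (if (true : Bool) then u.2.1 else u.1.1) = x
                ∧ (if x = u.1.1 then u.1.2 else u.2.2) = y}).indicator
              (fun u => ENNReal.ofReal (Qc u.1 u.2)) u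
            = if u.2 = (x, y) then ENNReal.ofReal (Qc u.1 u.2) else 0 := by
          intro u
          have hBmem : u ∈ {u : (Fin n × Bool) × (Fin n × Bool) |
              (if (true : Bool) then u.2.1 else u.1.1) = x
                ∧ (if x = u.1.1 then u.1.2 else u.2.2) = y}
              ↔ (u.2.1 = x ∧ (if x = u.1.1 then u.1.2 else u.2.2) = y) := by
            simp [Set.mem_setOf_eq]
          by_cases hA : u.2 = (x, y)
          · rw [if_pos hA]
            by_cases hB : u ∈ {u : (Fin n × Bool) × (Fin n × Bool) |
                (if (true : Bool) then u.2.1 else u.1.1) = x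
                  ∧ (if x = u.1.1 then u.1.2 else u.2.2) = y}
            · rw [Set.indicator_of_mem hB]
            · -- A and not B : the weight vanishes
              rw [Set.indicator_of_notMem hB]
              rw [hBmem] at hB
              have hB1 : u.2.1 = x := by rw [hA]
              push_neg at hB
              have hB2 := hB hB1
              by_cases hx : x = u.1.1
              · rw [if_pos hx] at hB2
                have hnot : u.1.2 = !y := bool_ne_eq_not hB2
                have hu1 : u.1 = (x, !y) := Prod.ext hx.symm hnot
                have hz : Qc u.1 u.2 = 0 := by
                  rw [hu1, hA]
                  have := hQcdiag x (!y)
                  rwa [Bool.not_not] at this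
                rw [hz, ENNReal.ofReal_zero]
              · rw [if_neg hx] at hB2
                have : u.2.2 = y := by rw [hA]
                exact absurd this hB2
          · rw [if_neg hA]
            by_cases hB : u ∈ {u : (Fin n × Bool) × (Fin n × Bool) |
                (if (true : Bool) then u.2.1 else u.1.1) = x
                  ∧ (if x = u.1.1 then u.1.2 else u.2.2) = y}
            · -- B and not A : the weight vanishes
              rw [Set.indicator_of_mem hB]
              rw [hBmem] at hB
              obtain ⟨hB1, hB2⟩ := hB
              have hne : u.2.2 ≠ y := fun h => hA (Prod.ext hB1 h)
              have hnot : u.2.2 = !y := bool_ne_eq_not hne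
              by_cases hx : x = u.1.1
              · rw [if_pos hx] at hB2
                have hu1 : u.1 = (x, y) := Prod.ext hx.symm hB2
                have hu2 : u.2 = (x, !y) := Prod.ext hB1 hnot
                rw [hu1, hu2, hQcdiag x y, ENNReal.ofReal_zero]
              · rw [if_neg hx] at hB2
                rw [hB2] at hnot
                exact absurd hnot (by cases y <;> simp)
            · rw [Set.indicator_of_notMem hB]
        rw [Finset.sum_congr rfl (fun u _ => hpoint u), Fintype.sum_prod_type]
        have hinner : ∀ l : Fin n × Bool,
            (∑ r : Fin n × Bool, if (l, r).2 = (x, y)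
              then ENNReal.ofReal (Qc (l, r).1 (l, r).2) else 0)
            = ENNReal.ofReal (Qc l (x, y)) := by
          intro l
          have heach : ∀ r : Fin n × Bool,
              (if (l, r).2 = (x, y) then ENNReal.ofReal (Qc (l, r).1 (l, r).2) else 0)
              = if r = (x, y) then ENNReal.ofReal (Qc l r) else 0 := fun r => rfl
          rw [Finset.sum_congr rfl (fun r _ => heach r),
            Finset.sum_ite_eq' Finset.univ (x, y) (fun r => ENNReal.ofReal (Qc l r))]
          simp
        rw [Finset.sum_congr rfl (fun l _ => hinner l),
          ← ENNReal.ofReal_sum_of_nonneg (fun l _ => hQcnn l (x, y)), hQccol (x, y)]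
    rw [hset2]
    have hofp : ENNReal.ofReal (p z (x, y)) = P {(x, y, z)} / Pz z := by
      rw [hpdef]
      exact ENNReal.ofReal_toReal (hdivtop z (x, y))
    rw [hofp, ENNReal.mul_div_cancel (hPzne z) (hPztop z)]
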